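/- If no graph in a class G_1 has a K_{2,m}-minor and no graph in a class G_2 has a K_{2,n}-minor, then no graph obtained by 2-summing a graph from G_1 with finitely many graphs from G_2 (over pairwise nonadjacent degree-2 vertices of the G_1-graph) has a K_{2,mn}-minor. -/

import Mathlib

open SimpleGraph

/-- `H` is a minor of `G`. -/
def IsMinor {V W : Type*} (G : SimpleGraph V) (H : SimpleGraph W) : Prop :=
  ∃ f : W → Set V,
    (∀ w, (f w).Nonempty) ∧
    (∀ w, (G.induce (f w)).Connected) ∧
    (∀ w₁ w₂, w₁ ≠ w₂ → Disjoint (f w₁) (f w₂)) ∧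
    (∀ w₁ w₂, H.Adj w₁ w₂ → ∃ v₁ ∈ f w₁, ∃ v₂ ∈ f w₂, G.Adj v₁ v₂)

/-- `G` is the simultaneous 2-sum of `G₀` with the graphs `H i`, `i : Fin t`,
performed over `t` pairwise nonadjacent degree-two vertices `z₀ i` of `G₀`
(with neighbors `x₀ i ≠ y₀ i`) and degree-two vertices `z i` of `H i`
(with neighbors `x i ≠ y i`); the summed vertices are deleted, `x₀ i` is
identified with `x i` and `y₀ i` with `y i`, the edge `xᵢyᵢ` (if present in
either summand) becomes an edge between the identified join vertices. -/
def IsMultiTwoSumOf {V V₀ : Type*} (G : SimpleGraph V) (G₀ : SimpleGraph V₀)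
    (t : ℕ) (W : Fin t → Type*) (H : ∀ i, SimpleGraph (W i)) : Prop :=
  ∃ (z₀ x₀ y₀ : Fin t → V₀) (z x y : ∀ i, W i)
    (f₀ : V₀ → V) (f : ∀ i, W i → V),
    Function.Injective z₀ ∧
    (∀ i, x₀ i ≠ y₀ i) ∧ (∀ i, x i ≠ y i) ∧
    (∀ i j, i ≠ j → ¬ G₀.Adj (z₀ i) (z₀ j)) ∧
    (∀ i u, G₀.Adj (z₀ i) u ↔ (u = x₀ i ∨ u = y₀ i)) ∧
    (∀ i u, (H i).Adj (z i) u ↔ (u = x i ∨ u = y i)) ∧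
    Set.InjOn f₀ {v | ∀ i, v ≠ z₀ i} ∧
    (∀ i, Set.InjOn (f i) {w | w ≠ z i}) ∧
    (∀ i, f₀ (x₀ i) = f i (x i) ∧ f₀ (y₀ i) = f i (y i)) ∧
    (∀ v : V, v ∈ f₀ '' {u | ∀ i, u ≠ z₀ i} ∨ ∃ i, v ∈ f i '' {w | w ≠ z i}) ∧
    (∀ i, (f₀ '' {u | ∀ j, u ≠ z₀ j}) ∩ (f i '' {w | w ≠ z i})
        = {f₀ (x₀ i), f₀ (y₀ i)}) ∧
    (∀ i j, i ≠ j →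
      (f i '' {w | w ≠ z i}) ∩ (f j '' {w | w ≠ z j}) ⊆ f₀ '' {u | ∀ k, u ≠ z₀ k}) ∧
    (∀ u v : V₀, (∀ i, u ≠ z₀ i) → (∀ i, v ≠ z₀ i) →
      (∀ i, s(u, v) ≠ s(x₀ i, y₀ i)) → (G.Adj (f₀ u) (f₀ v) ↔ G₀.Adj u v)) ∧
    (∀ i, ∀ u v : W i, u ≠ z i → v ≠ z i → s(u, v) ≠ s(x i, y i) →
      (G.Adj (f i u) (f i v) ↔ (H i).Adj u v)) ∧
    (∀ i, G.Adj (f₀ (x₀ i)) (f₀ (y₀ i)) ↔ (G₀.Adj (x₀ i) (y₀ i) ∨ (H i).Adj (x i) (y i))) ∧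
    (∀ a b : V, G.Adj a b →
      (a ∈ f₀ '' {u | ∀ i, u ≠ z₀ i} ∧ b ∈ f₀ '' {u | ∀ i, u ≠ z₀ i}) ∨
      ∃ i, a ∈ f i '' {w | w ≠ z i} ∧ b ∈ f i '' {w | w ≠ z i})

section Abstract

variable {V U ι : Type*} {G : SimpleGraph V} {T : SimpleGraph U}
variable {φ : U → V} {ζ ξ υ : ι → U} {O : ι → Set V} {K : Set U} {R : Set V}

/-- Exiting a piece: a walk from a vertex of `O i ∖ R` to a vertex of `R` must
first hit `O i ∩ R`, with a strictly shorter remaining walk. -/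
lemma exit_lemma (i : ι)
    (hOedge : ∀ v w, G.Adj v w → v ∈ O i → v ∉ R → w ∈ O i)
    (S : Set V) :
    ∀ (c b : ↥S) (w : (G.induce S).Walk c b), (c : V) ∈ O i → (c : V) ∉ R → (b : V) ∈ R →
      ∃ (d : ↥S) (w' : (G.induce S).Walk d b),
        (d : V) ∈ O i ∧ (d : V) ∈ R ∧ w'.length < w.length := by
  intro c b w
  induction w with
  | nil => intro _ h2 h3; exact absurd h3 h2
  | @cons c c' b hadj p ih =>
    intro h1 h2 h3
    have hG : G.Adj (c : V) (c' : V) := hadj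
    have hc'O : (c' : V) ∈ O i := hOedge _ _ hG h1 h2
    by_cases hm : (c' : V) ∈ R
    · exact ⟨c', p, hc'O, hm, Nat.lt_succ_self _⟩
    · obtain ⟨d, w', hd1, hd2, hlt⟩ := ih hc'O hm h3
      exact ⟨d, w', hd1, hd2, hlt.trans (Nat.lt_succ_self _)⟩

/-- A connected set meeting both the interior of a piece `O i` and `R`
contains one of the two gates of the piece. -/
lemma cross_lemma (i : ι)
    (hOR : O i ∩ R ⊆ {φ (ξ i), φ (υ i)})
    (hOedge : ∀ v w, G.Adj v w → v ∈ O i → v ∉ R → w ∈ O i)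
    (S : Set V) (hconn : (G.induce S).Connected)
    {v p : V} (hv : v ∈ S) (hvO : v ∈ O i) (hvR : v ∉ R) (hp : p ∈ S) (hpR : p ∈ R) :
    (φ (ξ i) ∈ S ∧ φ (ξ i) ∈ O i ∧ φ (ξ i) ∈ R) ∨
    (φ (υ i) ∈ S ∧ φ (υ i) ∈ O i ∧ φ (υ i) ∈ R) := by
  obtain ⟨w⟩ := hconn.preconnected ⟨v, hv⟩ ⟨p, hp⟩
  obtain ⟨d, _, hd1, hd2, _⟩ := exit_lemma i hOedge S _ _ w hvO hvR hpR
  rcases hOR ⟨hd1, hd2⟩ with h | h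
  · exact Or.inl ⟨h ▸ d.2, h ▸ hd1, h ▸ hd2⟩
  · exact Or.inr ⟨(Set.mem_singleton_iff.1 h) ▸ d.2, (Set.mem_singleton_iff.1 h) ▸ hd1,
      (Set.mem_singleton_iff.1 h) ▸ hd2⟩

/-- A connected set avoiding `R` that meets a piece `O i` is contained in it. -/
lemma local_lemma (i : ι)
    (hOedge : ∀ v w, G.Adj v w → v ∈ O i → v ∉ R → w ∈ O i)
    (S : Set V) (hconn : (G.induce S).Connected)
    (hSR : ∀ x ∈ S, x ∉ R) {v : V} (hv : v ∈ S) (hvO : v ∈ O i) :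
    ∀ w ∈ S, w ∈ O i := by
  suffices h : ∀ (c d : ↥S) (_ : (G.induce S).Walk c d), (c : V) ∈ O i → (d : V) ∈ O i by
    intro w hw
    obtain ⟨wk⟩ := hconn.preconnected ⟨v, hv⟩ ⟨w, hw⟩
    exact h _ _ wk hvO
  intro c d wk
  induction wk with
  | nil => exact id
  | @cons c c' d hadj p ih =>
    intro hc
    exact ih (hOedge _ _ hadj hc (hSR _ c.2))

end Abstract

section Abstract2

variable {V U ι : Type*} {G : SimpleGraph V} {T : SimpleGraph U}
variable {φ : U → V} {ζ ξ υ : ι → U} {O : ι → Set V} {K : Set U} {R : Set V}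

lemma reach_lemma
    (hR : R = φ '' K)
    (hζadj : ∀ i u, T.Adj (ζ i) u ↔ u = ξ i ∨ u = υ i)
    (hξK : ∀ i, ξ i ∈ K) (hυK : ∀ i, υ i ∈ K)
    (hinj : Set.InjOn φ K)
    (hedge : ∀ u v, u ∈ K → v ∈ K → (∀ i, s(u, v) ≠ s(ξ i, υ i)) →
      G.Adj (φ u) (φ v) → T.Adj u v)
    (hcover : ∀ v : V, v ∈ R ∨ ∃ i, v ∈ O i)
    (hOR : ∀ i, O i ∩ R ⊆ {φ (ξ i), φ (υ i)})
    (hOedge : ∀ i v w, G.Adj v w → v ∈ O i → v ∉ R → w ∈ O i)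
    (S : Set V) (Z : Set U)
    (hZ1 : ∀ i, φ (ξ i) ∈ S → φ (υ i) ∈ S → ζ i ∈ Z)
    (N : ℕ) :
    ∀ (aa bb : ↥S) (w : (G.induce S).Walk aa bb), w.length ≤ N →
      ∀ (u v : U) (hu : u ∈ K ∧ φ u ∈ S) (hv : v ∈ K ∧ φ v ∈ S),
      φ u = (aa : V) → φ v = (bb : V) →
      (T.induce ({p | p ∈ K ∧ φ p ∈ S} ∪ Z)).Reachable ⟨u, Or.inl hu⟩ ⟨v, Or.inl hv⟩ := by
  induction N with
  | zero =>
    intro aa bb w hw u v hu hv hφu hφv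
    have h0 : w.length = 0 := Nat.le_zero.1 hw
    have : aa = bb := (SimpleGraph.Walk.eq_of_length_eq_zero h0)
    have huv : u = v := hinj hu.1 hv.1 (by rw [hφu, hφv, this])
    exact huv ▸ SimpleGraph.Reachable.refl _
  | succ N ihN =>
    intro aa bb w hw u v hu hv hφu hφv
    cases w with
    | nil =>
      have huv : u = v := hinj hu.1 hv.1 (by rw [hφu, hφv])
      exact huv ▸ SimpleGraph.Reachable.refl _
    | @cons _ cc _ hadj p =>
      have hG : G.Adj (aa : V) (cc : V) := hadj
      have hplen : p.length ≤ N := by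
        have : p.length + 1 ≤ N + 1 := hw
        omega
      by_cases hcR : (cc : V) ∈ R
      · -- next vertex still in R
        obtain ⟨u', hu'K, hφu'⟩ := hR ▸ hcR
        have hu' : u' ∈ K ∧ φ u' ∈ S := ⟨hu'K, hφu' ▸ cc.2⟩
        by_cases hvp : ∀ i, s(u, u') ≠ s(ξ i, υ i)
        · have hTadj : T.Adj u u' := hedge _ _ hu.1 hu'K hvp (by rw [hφu, hφu']; exact hG)
          have step : (T.induce ({p | p ∈ K ∧ φ p ∈ S} ∪ Z)).Adj
              ⟨u, Or.inl hu⟩ ⟨u', Or.inl hu'⟩ := hTadj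
          exact step.reachable.trans (ihN cc bb p hplen u' v hu' hv hφu' hφv)
        · push_neg at hvp
          obtain ⟨i, hi⟩ := hvp
          have hζZ : ζ i ∈ Z := by
            rcases Sym2.eq_iff.1 hi with ⟨h1, h2⟩ | ⟨h1, h2⟩
            · exact hZ1 i (h1 ▸ hu.2) (h2 ▸ hu'.2)
            · exact hZ1 i (h2 ▸ hu'.2) (h1 ▸ hu.2)
          have hζmem : ζ i ∈ {p | p ∈ K ∧ φ p ∈ S} ∪ Z := Or.inr hζZ
          have hadj1 : T.Adj u (ζ i) := by
            rcases Sym2.eq_iff.1 hi with ⟨h1, _⟩ | ⟨h1, _⟩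
            · exact ((hζadj i u).2 (Or.inl h1)).symm
            · exact ((hζadj i u).2 (Or.inr h1)).symm
          have hadj2 : T.Adj (ζ i) u' := by
            rcases Sym2.eq_iff.1 hi with ⟨_, h2⟩ | ⟨_, h2⟩
            · exact (hζadj i u').2 (Or.inr h2)
            · exact (hζadj i u').2 (Or.inl h2)
          have step1 : (T.induce ({p | p ∈ K ∧ φ p ∈ S} ∪ Z)).Adj
              ⟨u, Or.inl hu⟩ ⟨ζ i, hζmem⟩ := hadj1
          have step2 : (T.induce ({p | p ∈ K ∧ φ p ∈ S} ∪ Z)).Adj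
              ⟨ζ i, hζmem⟩ ⟨u', Or.inl hu'⟩ := hadj2
          exact (step1.reachable.trans step2.reachable).trans
            (ihN cc bb p hplen u' v hu' hv hφu' hφv)
      · -- next vertex leaves R into a piece
        obtain ⟨i, hcO⟩ := (hcover (cc : V)).resolve_left hcR
        have haaO : (aa : V) ∈ O i := hOedge i _ _ hG.symm hcO hcR
        have haaR : (aa : V) ∈ R := hR ▸ ⟨u, hu.1, hφu⟩
        have hbbR : (bb : V) ∈ R := hR ▸ ⟨v, hv.1, hφv⟩
        obtain ⟨d, w', hdO, hdR, hlt⟩ := exit_lemma i (hOedge i) S cc bb p hcO hcR hbbR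
        have hw' : w'.length ≤ N := by omega
        have hdgate := hOR i ⟨hdO, hdR⟩
        have haagate := hOR i ⟨haaO, haaR⟩
        -- pull back d to some u'' ∈ {ξ i, υ i}
        by_cases heq : (aa : V) = (d : V)
        · exact ihN d bb w' hw' u v ⟨hu.1, (hφu.trans heq) ▸ hu.2⟩ hv (hφu.trans heq) hφv
        · have hboth : φ (ξ i) ∈ S ∧ φ (υ i) ∈ S := by
            rcases haagate with h1 | h1 <;> rcases hdgate with h2 | h2
            · exact absurd (h1.trans h2.symm) heq
            · exact ⟨h1 ▸ aa.2, (Set.mem_singleton_iff.1 h2) ▸ d.2⟩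
            · exact ⟨h2 ▸ d.2, (Set.mem_singleton_iff.1 h1) ▸ aa.2⟩
            · exact absurd ((Set.mem_singleton_iff.1 h1).trans
                (Set.mem_singleton_iff.1 h2).symm) heq
          have hζZ : ζ i ∈ Z := hZ1 i hboth.1 hboth.2
          have hζmem : ζ i ∈ {p | p ∈ K ∧ φ p ∈ S} ∪ Z := Or.inr hζZ
          -- u equals the gate-preimage corresponding to aa
          rcases haagate with h1 | h1 <;> rcases hdgate with h2 | h2
          · exact absurd (h1.trans h2.symm) heq
          · -- aa = φ ξ i, d = φ υ i
            have huξ : u = ξ i := hinj hu.1 (hξK i) (by rw [hφu, h1])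
            have hυmem : υ i ∈ {p | p ∈ K ∧ φ p ∈ S} ∪ Z :=
              Or.inl ⟨hυK i, hboth.2⟩
            have step1 : (T.induce ({p | p ∈ K ∧ φ p ∈ S} ∪ Z)).Adj
                ⟨u, Or.inl hu⟩ ⟨ζ i, hζmem⟩ :=
              ((hζadj i u).2 (Or.inl huξ)).symm
            have step2 : (T.induce ({p | p ∈ K ∧ φ p ∈ S} ∪ Z)).Adj
                ⟨ζ i, hζmem⟩ ⟨υ i, hυmem⟩ :=
              (hζadj i (υ i)).2 (Or.inr rfl)
            exact (step1.reachable.trans step2.reachable).trans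
              (ihN d bb w' hw' (υ i) v ⟨hυK i, hboth.2⟩ hv
                (Set.mem_singleton_iff.1 h2).symm hφv)
          · -- aa = φ υ i, d = φ ξ i
            have huυ : u = υ i := hinj hu.1 (hυK i)
              (by rw [hφu, Set.mem_singleton_iff.1 h1])
            have hξmem : ξ i ∈ {p | p ∈ K ∧ φ p ∈ S} ∪ Z :=
              Or.inl ⟨hξK i, hboth.1⟩
            have step1 : (T.induce ({p | p ∈ K ∧ φ p ∈ S} ∪ Z)).Adj
                ⟨u, Or.inl hu⟩ ⟨ζ i, hζmem⟩ :=
              ((hζadj i u).2 (Or.inr huυ)).symm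
            have step2 : (T.induce ({p | p ∈ K ∧ φ p ∈ S} ∪ Z)).Adj
                ⟨ζ i, hζmem⟩ ⟨ξ i, hξmem⟩ :=
              (hζadj i (ξ i)).2 (Or.inl rfl)
            exact (step1.reachable.trans step2.reachable).trans
              (ihN d bb w' hw' (ξ i) v ⟨hξK i, hboth.1⟩ hv h2.symm hφv)
          · exact absurd ((Set.mem_singleton_iff.1 h1).trans
              (Set.mem_singleton_iff.1 h2).symm) heq

end Abstract2

section Abstract3

variable {V U ι : Type*} {G : SimpleGraph V} {T : SimpleGraph U}
variable {φ : U → V} {ζ ξ υ : ι → U} {O : ι → Set V} {K : Set U} {R : Set V}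

lemma connect_lemma
    (hR : R = φ '' K)
    (hζadj : ∀ i u, T.Adj (ζ i) u ↔ u = ξ i ∨ u = υ i)
    (hξK : ∀ i, ξ i ∈ K) (hυK : ∀ i, υ i ∈ K)
    (hinj : Set.InjOn φ K)
    (hedge : ∀ u v, u ∈ K → v ∈ K → (∀ i, s(u, v) ≠ s(ξ i, υ i)) →
      G.Adj (φ u) (φ v) → T.Adj u v)
    (hcover : ∀ v : V, v ∈ R ∨ ∃ i, v ∈ O i)
    (hOR : ∀ i, O i ∩ R ⊆ {φ (ξ i), φ (υ i)})
    (hOedge : ∀ i v w, G.Adj v w → v ∈ O i → v ∉ R → w ∈ O i)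
    (S : Set V) (Z : Set U)
    (hZ1 : ∀ i, φ (ξ i) ∈ S → φ (υ i) ∈ S → ζ i ∈ Z)
    (hZ2 : ∀ p ∈ Z, ∃ i, p = ζ i ∧ φ (ξ i) ∈ S)
    (hconn : (G.induce S).Connected) (hne : (S ∩ R).Nonempty) :
    (T.induce ({p | p ∈ K ∧ φ p ∈ S} ∪ Z)).Connected := by
  classical
  set M : Set U := {p | p ∈ K ∧ φ p ∈ S} ∪ Z with hM
  have hbase : ∀ (α : ↥M), ∃ (u : U) (hu : u ∈ K ∧ φ u ∈ S),
      (T.induce M).Reachable α ⟨u, Or.inl hu⟩ := by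
    rintro ⟨α, hα | hαZ⟩
    · exact ⟨α, hα, SimpleGraph.Reachable.refl _⟩
    · obtain ⟨i, rfl, hξS⟩ := hZ2 _ hαZ
      have hu : ξ i ∈ K ∧ φ (ξ i) ∈ S := ⟨hξK i, hξS⟩
      have step : (T.induce M).Adj ⟨ζ i, Or.inr hαZ⟩ ⟨ξ i, Or.inl hu⟩ :=
        (hζadj i (ξ i)).2 (Or.inl rfl)
      exact ⟨ξ i, hu, step.reachable⟩
  have hreach : ∀ (u v : U) (hu : u ∈ K ∧ φ u ∈ S) (hv : v ∈ K ∧ φ v ∈ S),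
      (T.induce M).Reachable ⟨u, Or.inl hu⟩ ⟨v, Or.inl hv⟩ := by
    intro u v hu hv
    obtain ⟨w⟩ := hconn.preconnected ⟨φ u, hu.2⟩ ⟨φ v, hv.2⟩
    exact reach_lemma hR hζadj hξK hυK hinj hedge hcover hOR hOedge S Z hZ1
      w.length _ _ w le_rfl u v hu hv rfl rfl
  have hNE : Nonempty ↥M := by
    obtain ⟨x, hxS, hxR⟩ := hne
    obtain ⟨u, huK, hφu⟩ := hR ▸ hxR
    exact ⟨⟨u, Or.inl ⟨huK, hφu ▸ hxS⟩⟩⟩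
  refine ⟨fun α β => ?_⟩
  obtain ⟨u, hu, hα⟩ := hbase α
  obtain ⟨v, hv, hβ⟩ := hbase β
  exact (hα.trans (hreach u v hu hv)).trans hβ.symm

/-- Connectedness of an induced singleton. -/
lemma induce_singleton_connected (T : SimpleGraph U) (v : U) :
    (T.induce {v}).Connected := by
  have hNE : Nonempty ↥({v} : Set U) := ⟨⟨v, rfl⟩⟩
  refine ⟨fun a b => ?_⟩
  obtain ⟨a, ha⟩ := a
  obtain ⟨b, hb⟩ := b
  rw [Set.mem_singleton_iff] at ha hb
  subst ha; subst hb
  exact SimpleGraph.Reachable.refl _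

end Abstract3

section Builders

lemma isMinor_K2 {U : Type*} (T : SimpleGraph U) (k : ℕ) (A B : Set U) (C : Fin k → Set U)
    (hAne : A.Nonempty) (hBne : B.Nonempty) (hCne : ∀ j, (C j).Nonempty)
    (hAc : (T.induce A).Connected) (hBc : (T.induce B).Connected)
    (hCc : ∀ j, (T.induce (C j)).Connected)
    (hAB : Disjoint A B) (hAC : ∀ j, Disjoint A (C j)) (hBC : ∀ j, Disjoint B (C j))
    (hCC : ∀ j l, j ≠ l → Disjoint (C j) (C l))
    (hadjA : ∀ j, ∃ p ∈ A, ∃ q ∈ C j, T.Adj p q)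
    (hadjB : ∀ j, ∃ p ∈ B, ∃ q ∈ C j, T.Adj p q) :
    IsMinor T (completeBipartiteGraph (Fin 2) (Fin k)) := by
  classical
  refine ⟨Sum.elim (fun r => if r = 0 then A else B) C, ?_, ?_, ?_, ?_⟩
  · rintro (r | j)
    · by_cases h : r = 0 <;> simp [h, hAne, hBne]
    · exact hCne j
  · rintro (r | j)
    · by_cases h : r = 0
      · show (induce (if r = 0 then A else B) T).Connected
        rw [if_pos h]; exact hAc
      · show (induce (if r = 0 then A else B) T).Connected
        rw [if_neg h]; exact hBc
    · exact hCc j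
  · rintro (r1 | j1) (r2 | j2) hne
    · have hr : r1 ≠ r2 := fun h => hne (by rw [h])
      fin_cases r1 <;> fin_cases r2 <;> simp_all
      · exact hAB.symm
    · by_cases h : r1 = 0 <;> simp [h, hAC, hBC]
    · by_cases h : r2 = 0 <;> simp [h, (hAC j1).symm, (hBC j1).symm]
    · exact hCC j1 j2 (fun h => hne (by rw [h]))
  · rintro (r1 | j1) (r2 | j2) hadj
    · simp at hadj
    · by_cases h : r1 = 0
      · obtain ⟨p, hp, q, hq, hpq⟩ := hadjA j2
        exact ⟨p, by simp [h, hp], q, hq, hpq⟩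
      · obtain ⟨p, hp, q, hq, hpq⟩ := hadjB j2
        exact ⟨p, by simp [h, hp], q, hq, hpq⟩
    · by_cases h : r2 = 0
      · obtain ⟨p, hp, q, hq, hpq⟩ := hadjA j1
        exact ⟨q, hq, p, by simp [h, hp], hpq.symm⟩
      · obtain ⟨p, hp, q, hq, hpq⟩ := hadjB j1
        exact ⟨q, hq, p, by simp [h, hp], hpq.symm⟩
    · simp at hadj

lemma exists_inj_fin {α : Type*} [DecidableEq α] (s : Finset α) (k : ℕ) (h : k ≤ s.card) :
    ∃ g : Fin k → α, Function.Injective g ∧ ∀ j, g j ∈ s := by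
  obtain ⟨t, hts, htc⟩ := Finset.exists_subset_card_eq h
  have hlen : t.toList.length = k := by rw [Finset.length_toList, htc]
  refine ⟨fun j => t.toList.get (Fin.cast hlen.symm j), ?_, ?_⟩
  · intro j1 j2 hj
    have h2 := List.nodup_iff_injective_get.1 t.nodup_toList hj
    simpa [Fin.ext_iff] using h2
  · intro j
    exact hts (Finset.mem_toList.1 (t.toList.get_mem _))

end Builders

/-- If `G₀` has no `K_{2,m}`-minor and each `H i` has no `K_{2,n}`-minor, then the
simultaneous 2-sum `G` of `G₀` with the `H i` has no `K_{2,mn}`-minor. -/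
theorem no_K2mn_minor_of_multiTwoSum {V V₀ : Type*} (m n : ℕ)
    (hm : 0 < m) (hn : 0 < n)
    (G : SimpleGraph V) (G₀ : SimpleGraph V₀) (t : ℕ)
    (W : Fin t → Type*) (H : ∀ i, SimpleGraph (W i))
    (hsum : IsMultiTwoSumOf G G₀ t W H)
    (h₀ : ¬ IsMinor G₀ (completeBipartiteGraph (Fin 2) (Fin m)))
    (hH : ∀ i, ¬ IsMinor (H i) (completeBipartiteGraph (Fin 2) (Fin n))) :
    ¬ IsMinor G (completeBipartiteGraph (Fin 2) (Fin (m * n))) := by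
  classical
  obtain ⟨z₀, x₀, y₀, z, x, y, f₀, f, hz₀inj, hxy₀, hxy, hz₀nadj, hz₀adj, hzadj,
    hf₀inj, hfinj, hglue, hcoverV, hPQ, hQQ, hedgeP, hedgeQ, hvirt, hedgesG⟩ := hsum
  intro hmin
  obtain ⟨F, hFne, hFconn, hFdisj, hFadj⟩ := hmin
  -- names
  -- S₀ = {u : V₀ | ∀ i, u ≠ z₀ i}; P = f₀ '' S₀ ; Q i = f i '' {w | w ≠ z i}
  -- basic membership facts
  have hx₀S : ∀ i, x₀ i ∈ {u : V₀ | ∀ j, u ≠ z₀ j} := by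
    intro i j hj
    have hadj : G₀.Adj (z₀ i) (x₀ i) := (hz₀adj i _).2 (Or.inl rfl)
    by_cases hij : j = i
    · subst hij; rw [hj] at hadj; exact G₀.irrefl hadj
    · rw [hj] at hadj; exact hz₀nadj i j (fun h => hij h.symm) hadj
  have hy₀S : ∀ i, y₀ i ∈ {u : V₀ | ∀ j, u ≠ z₀ j} := by
    intro i j hj
    have hadj : G₀.Adj (z₀ i) (y₀ i) := (hz₀adj i _).2 (Or.inr rfl)
    by_cases hij : j = i
    · subst hij; rw [hj] at hadj; exact G₀.irrefl hadj
    · rw [hj] at hadj; exact hz₀nadj i j (fun h => hij h.symm) hadj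
  have hxz : ∀ i, x i ≠ z i := fun i => ((hzadj i (x i)).2 (Or.inl rfl)).ne'
  have hyz : ∀ i, y i ≠ z i := fun i => ((hzadj i (y i)).2 (Or.inr rfl)).ne'
  have haP : ∀ i, f₀ (x₀ i) ∈ f₀ '' {u : V₀ | ∀ j, u ≠ z₀ j} := fun i => ⟨x₀ i, hx₀S i, rfl⟩
  have hbP : ∀ i, f₀ (y₀ i) ∈ f₀ '' {u : V₀ | ∀ j, u ≠ z₀ j} := fun i => ⟨y₀ i, hy₀S i, rfl⟩
  have haQ : ∀ i, f₀ (x₀ i) ∈ f i '' {w : W i | w ≠ z i} :=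
    fun i => ⟨x i, hxz i, ((hglue i).1).symm⟩
  have hbQ : ∀ i, f₀ (y₀ i) ∈ f i '' {w : W i | w ≠ z i} :=
    fun i => ⟨y i, hyz i, ((hglue i).2).symm⟩
  have hgg : ∀ i, f₀ (x₀ i) ≠ f₀ (y₀ i) :=
    fun i h => hxy₀ i (hf₀inj (hx₀S i) (hy₀S i) h)
  have hPQ' : ∀ i, (f i '' {w : W i | w ≠ z i}) ∩ (f₀ '' {u : V₀ | ∀ j, u ≠ z₀ j})
      ⊆ {f₀ (x₀ i), f₀ (y₀ i)} := by
    intro i v hv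
    have h2 : v ∈ (f₀ '' {u : V₀ | ∀ j, u ≠ z₀ j}) ∩ (f i '' {w : W i | w ≠ z i}) :=
      ⟨hv.2, hv.1⟩
    rw [hPQ i] at h2
    exact h2
  -- edges from the interior of a piece stay in the piece
  have hQedge : ∀ (i : Fin t) (v w : V), G.Adj v w → v ∈ f i '' {w : W i | w ≠ z i} →
      v ∉ f₀ '' {u : V₀ | ∀ j, u ≠ z₀ j} → w ∈ f i '' {w : W i | w ≠ z i} := by
    intro i v w hadj hvQ hvP
    rcases hedgesG v w hadj with ⟨hv, _⟩ | ⟨j, hvj, hwj⟩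
    · exact absurd hv hvP
    · by_cases hij : j = i
      · subst hij; exact hwj
      · exact absurd (hQQ i j (fun h => hij h.symm) ⟨hvQ, hvj⟩) hvP
  -- edges from outside a piece stay outside (or hit the gates)
  have hOH : ∀ (i : Fin t) (v w : V), G.Adj v w →
      v ∈ (f i '' {w : W i | w ≠ z i})ᶜ ∪ {f₀ (x₀ i), f₀ (y₀ i)} →
      v ∉ f i '' {w : W i | w ≠ z i} →
      w ∈ (f i '' {w : W i | w ≠ z i})ᶜ ∪ {f₀ (x₀ i), f₀ (y₀ i)} := by
    intro i v w hadj _ hvQ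
    by_cases hwQ : w ∈ f i '' {w : W i | w ≠ z i}
    · rcases hedgesG v w hadj with ⟨_, hw⟩ | ⟨j, hvj, hwj⟩
      · exact Or.inr (hPQ' i ⟨hwQ, hw⟩)
      · by_cases hij : j = i
        · subst hij; exact absurd hvj hvQ
        · exact Or.inr (hPQ' i ⟨hwQ, hQQ i j (fun h => hij h.symm) ⟨hwQ, hwj⟩⟩)
    · exact Or.inl hwQ
  -- gate ownership lemmas
  have hGateP : ∀ (S : Set V), (G.induce S).Connected → ∀ (i : Fin t) (v p : V),
      v ∈ S → v ∈ f i '' {w : W i | w ≠ z i} → v ∉ f₀ '' {u : V₀ | ∀ j, u ≠ z₀ j} →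
      p ∈ S → p ∈ f₀ '' {u : V₀ | ∀ j, u ≠ z₀ j} →
      f₀ (x₀ i) ∈ S ∨ f₀ (y₀ i) ∈ S := by
    intro S hconn i v p hvS hvQ hvP hpS hpP
    have h := cross_lemma (G := G) (φ := f₀) (ξ := x₀) (υ := y₀)
      (O := fun i => f i '' {w : W i | w ≠ z i})
      (R := f₀ '' {u : V₀ | ∀ j, u ≠ z₀ j}) i
      (by intro u hu; exact hPQ' i ⟨hu.1, hu.2⟩) (hQedge i) S hconn hvS hvQ hvP hpS hpP
    exact h.imp (fun h => h.1) (fun h => h.1)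
  have hGateQ : ∀ (S : Set V), (G.induce S).Connected → ∀ (i : Fin t) (v p : V),
      v ∈ S → v ∉ f i '' {w : W i | w ≠ z i} →
      p ∈ S → p ∈ f i '' {w : W i | w ≠ z i} →
      f₀ (x₀ i) ∈ S ∨ f₀ (y₀ i) ∈ S := by
    intro S hconn i v p hvS hvQ hpS hpQ
    have h := cross_lemma (G := G) (φ := f₀) (ξ := fun _ : Fin t => x₀ i)
      (υ := fun _ => y₀ i)
      (O := fun _ : Fin t => (f i '' {w : W i | w ≠ z i})ᶜ ∪ {f₀ (x₀ i), f₀ (y₀ i)})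
      (R := f i '' {w : W i | w ≠ z i}) i
      (by intro u hu
          rcases hu.1 with h | h
          · exact absurd hu.2 h
          · exact h)
      (fun v w hadj hv hv' => hOH i v w hadj hv hv') S hconn hvS (Or.inl hvQ) hvQ hpS hpQ
    exact h.imp (fun h => h.1) (fun h => h.1)
  have hLocalQ : ∀ (S : Set V), (G.induce S).Connected →
      (∀ x ∈ S, x ∉ f₀ '' {u : V₀ | ∀ j, u ≠ z₀ j}) → ∀ (i : Fin t) (v : V),
      v ∈ S → v ∈ f i '' {w : W i | w ≠ z i} → ∀ w ∈ S, w ∈ f i '' {w : W i | w ≠ z i} := by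
    intro S hconn hSP i v hvS hvQ
    exact local_lemma (G := G) (O := fun i => f i '' {w : W i | w ≠ z i})
      (R := f₀ '' {u : V₀ | ∀ j, u ≠ z₀ j}) i (hQedge i) S hconn hSP hvS hvQ
  -- branch sets of the K_{2,mn}-minor
  set A : Set V := F (Sum.inl 0) with hAdef
  set B : Set V := F (Sum.inl 1) with hBdef
  set C : Fin (m * n) → Set V := fun k => F (Sum.inr k) with hCdef
  have hAne : A.Nonempty := hFne (Sum.inl 0)
  have hBne : B.Nonempty := hFne (Sum.inl 1)
  have hCne : ∀ k, (C k).Nonempty := fun k => hFne (Sum.inr k)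
  have hAco : (G.induce A).Connected := hFconn (Sum.inl 0)
  have hBco : (G.induce B).Connected := hFconn (Sum.inl 1)
  have hCco : ∀ k, (G.induce (C k)).Connected := fun k => hFconn (Sum.inr k)
  have hdAB : Disjoint A B := hFdisj _ _ (by simp)
  have hdAC : ∀ k, Disjoint A (C k) := fun k => hFdisj _ _ (by simp)
  have hdBC : ∀ k, Disjoint B (C k) := fun k => hFdisj _ _ (by simp)
  have hdCC : ∀ k l, k ≠ l → Disjoint (C k) (C l) :=
    fun k l h => hFdisj _ _ (fun e => h (Sum.inr.inj e))
  have hACadj : ∀ k, ∃ p ∈ A, ∃ q ∈ C k, G.Adj p q :=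
    fun k => hFadj (Sum.inl 0) (Sum.inr k) (by simp)
  have hBCadj : ∀ k, ∃ p ∈ B, ∃ q ∈ C k, G.Adj p q :=
    fun k => hFadj (Sum.inl 1) (Sum.inr k) (by simp)
  -- shortcuts: if some piece exists then m ≥ 2 and n ≥ 2
  have hm2 : ∀ _ : Fin t, 2 ≤ m := by
    intro i
    by_contra hlt
    have hm1 : m = 1 := by omega
    apply h₀
    rw [hm1]
    exact isMinor_K2 G₀ 1 {x₀ i} {y₀ i} (fun _ => {z₀ i})
      ⟨_, rfl⟩ ⟨_, rfl⟩ (fun _ => ⟨_, rfl⟩)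
      (induce_singleton_connected _ _) (induce_singleton_connected _ _)
      (fun _ => induce_singleton_connected _ _)
      (Set.disjoint_singleton.2 (hxy₀ i))
      (fun _ => Set.disjoint_singleton.2 (hx₀S i i))
      (fun _ => Set.disjoint_singleton.2 (hy₀S i i))
      (fun j l hjl => absurd (Subsingleton.elim j l) hjl)
      (fun _ => ⟨x₀ i, rfl, z₀ i, rfl, ((hz₀adj i _).2 (Or.inl rfl)).symm⟩)
      (fun _ => ⟨y₀ i, rfl, z₀ i, rfl, ((hz₀adj i _).2 (Or.inr rfl)).symm⟩)
  have hn2 : ∀ _ : Fin t, 2 ≤ n := by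
    intro i
    by_contra hlt
    have hn1 : n = 1 := by omega
    apply hH i
    rw [hn1]
    exact isMinor_K2 (H i) 1 {x i} {y i} (fun _ => {z i})
      ⟨_, rfl⟩ ⟨_, rfl⟩ (fun _ => ⟨_, rfl⟩)
      (induce_singleton_connected _ _) (induce_singleton_connected _ _)
      (fun _ => induce_singleton_connected _ _)
      (Set.disjoint_singleton.2 (hxy i))
      (fun _ => Set.disjoint_singleton.2 (hxz i))
      (fun _ => Set.disjoint_singleton.2 (hyz i))
      (fun j l hjl => absurd (Subsingleton.elim j l) hjl)
      (fun _ => ⟨x i, rfl, z i, rfl, ((hzadj i _).2 (Or.inl rfl)).symm⟩)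
      (fun _ => ⟨y i, rfl, z i, rfl, ((hzadj i _).2 (Or.inr rfl)).symm⟩)
  -- the key piece bound: no n of the C's can be inner to one piece
  have Hbound : ∀ (i : Fin t) (g : Fin n → Fin (m * n)), Function.Injective g →
      (∀ j, C (g j) ⊆ f i '' {w : W i | w ≠ z i} ∧
        f₀ (x₀ i) ∉ C (g j) ∧ f₀ (y₀ i) ∉ C (g j)) → False := by
    intro i g hginj hg
    have hint : ∀ j, ∀ v ∈ C (g j), v ∈ f i '' {w : W i | w ≠ z i} ∧
        v ∉ f₀ '' {u : V₀ | ∀ j, u ≠ z₀ j} := by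
      intro j v hv
      refine ⟨(hg j).1 hv, fun hvP => ?_⟩
      rcases hPQ' i ⟨(hg j).1 hv, hvP⟩ with h | h
      · exact (hg j).2.1 (h ▸ hv)
      · exact (hg j).2.2 (Set.mem_singleton_iff.1 h ▸ hv)
    have hhub : ∀ (X : Set V), (∀ k, ∃ p ∈ X, ∃ q ∈ C k, G.Adj p q) →
        (X ∩ f i '' {w : W i | w ≠ z i}).Nonempty := by
      intro X hX
      obtain ⟨p, hp, q, hq, hpq⟩ := hX (g ⟨0, hn⟩)
      have h2 := hint ⟨0, hn⟩ q hq
      exact ⟨p, hp, hQedge i q p hpq.symm h2.1 h2.2⟩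
    -- connectivity transfer into the piece
    have hcn : ∀ (S : Set V) (Z : Set (W i)),
        (∀ _ : Unit, f i (x i) ∈ S → f i (y i) ∈ S → z i ∈ Z) →
        (∀ p ∈ Z, ∃ _ : Unit, p = z i ∧ f i (x i) ∈ S) →
        (G.induce S).Connected → (S ∩ f i '' {w : W i | w ≠ z i}).Nonempty →
        ((H i).induce ({p | p ∈ {w : W i | w ≠ z i} ∧ f i p ∈ S} ∪ Z)).Connected := by
      intro S Z hZ1 hZ2 hco hne
      exact connect_lemma (G := G) (T := H i) (φ := f i) (ζ := fun _ : Unit => z i)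
        (ξ := fun _ => x i) (υ := fun _ => y i)
        (O := fun _ : Unit => (f i '' {w : W i | w ≠ z i})ᶜ ∪ {f₀ (x₀ i), f₀ (y₀ i)})
        (K := {w : W i | w ≠ z i}) (R := f i '' {w : W i | w ≠ z i}) rfl
        (fun _ => hzadj i) (fun _ => hxz i) (fun _ => hyz i) (hfinj i)
        (fun u v hu hv hs ha => (hedgeQ i u v hu hv (hs ())).1 ha)
        (fun v => by
          by_cases h : v ∈ f i '' {w : W i | w ≠ z i}
          · exact Or.inl h
          · exact Or.inr ⟨(), Or.inl h⟩)
        (fun _ u hu => by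
          rcases hu.1 with h | h
          · exact absurd hu.2 h
          · rcases h with h | h
            · exact (by rw [h, (hglue i).1]; exact Set.mem_insert _ _)
            · exact (by rw [Set.mem_singleton_iff.1 h, (hglue i).2]
                        exact Set.mem_insert_iff.2 (Or.inr rfl)))
        (fun _ v w hadj hv hv' => hOH i v w hadj hv hv')
        S Z hZ1 hZ2 hco hne
    have hdisjH : ∀ (S S' : Set V) (Z Z' : Set (W i)),
        Disjoint S S' → (∀ p ∈ Z, p = z i ∧ f₀ (x₀ i) ∈ S) →
        (∀ p ∈ Z', p = z i ∧ f₀ (x₀ i) ∈ S') →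
        Disjoint ({p | p ∈ {w : W i | w ≠ z i} ∧ f i p ∈ S} ∪ Z)
                 ({p | p ∈ {w : W i | w ≠ z i} ∧ f i p ∈ S'} ∪ Z') := by
      intro S S' Z Z' hSS hZ hZ'
      rw [Set.disjoint_left]
      rintro p (hp | hp) (hp' | hp')
      · exact Set.disjoint_left.1 hSS hp.2 hp'.2
      · exact hp.1 (hZ' p hp').1
      · exact hp'.1 (hZ p hp).1
      · exact Set.disjoint_left.1 hSS (hZ p hp).2 (hZ' p hp').2
    have hadjH : ∀ (X : Set V) (Zx : Set (W i)) (j : Fin n),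
        (∃ p ∈ X, ∃ q ∈ C (g j), G.Adj p q) →
        ∃ p' ∈ {p | p ∈ {w : W i | w ≠ z i} ∧ f i p ∈ X} ∪ Zx,
          ∃ q' ∈ {p | p ∈ {w : W i | w ≠ z i} ∧ f i p ∈ C (g j)} ∪ (∅ : Set (W i)),
            (H i).Adj p' q' := by
      intro X Zx j hXj
      obtain ⟨p, hpX, q, hq, hpq⟩ := hXj
      have h2 := hint j q hq
      have hpQ : p ∈ f i '' {w : W i | w ≠ z i} := hQedge i q p hpq.symm h2.1 h2.2
      obtain ⟨wp, hwp, hfp⟩ := hpQ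
      obtain ⟨wq, hwq, hfq⟩ := h2.1
      have hs : s(wp, wq) ≠ s(x i, y i) := by
        intro hs
        rcases Sym2.eq_iff.1 hs with ⟨h1, hq2⟩ | ⟨h1, hq2⟩
        · refine (hg j).2.2 ?_
          have hqe : f₀ (y₀ i) = q := by rw [(hglue i).2, ← hq2, hfq]
          exact hqe ▸ hq
        · refine (hg j).2.1 ?_
          have hqe : f₀ (x₀ i) = q := by rw [(hglue i).1, ← hq2, hfq]
          exact hqe ▸ hq
      have hHadj : (H i).Adj wp wq :=
        (hedgeQ i wp wq hwp hwq hs).1 (by rw [hfp, hfq]; exact hpq)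
      exact ⟨wp, Or.inl ⟨hwp, hfp.symm ▸ hpX⟩, wq, Or.inl ⟨hwq, hfq.symm ▸ hq⟩, hHadj⟩
    apply hH i
    refine isMinor_K2 (H i) n
      ({p | p ∈ {w : W i | w ≠ z i} ∧ f i p ∈ A} ∪ {w : W i | w = z i ∧ f₀ (x₀ i) ∈ A})
      ({p | p ∈ {w : W i | w ≠ z i} ∧ f i p ∈ B} ∪ {w : W i | w = z i ∧ f₀ (x₀ i) ∈ B})
      (fun j => {p | p ∈ {w : W i | w ≠ z i} ∧ f i p ∈ C (g j)} ∪ (∅ : Set (W i)))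
      ?_ ?_ ?_ ?_ ?_ ?_ ?_ ?_ ?_ ?_ ?_ ?_
    · obtain ⟨p, hpA, wp, hwp, hfp⟩ := hhub A hACadj
      exact ⟨wp, Or.inl ⟨hwp, hfp.symm ▸ hpA⟩⟩
    · obtain ⟨p, hpB, wp, hwp, hfp⟩ := hhub B hBCadj
      exact ⟨wp, Or.inl ⟨hwp, hfp.symm ▸ hpB⟩⟩
    · intro j
      obtain ⟨v, hv⟩ := hCne (g j)
      obtain ⟨wv, hwv, hfv⟩ := (hint j v hv).1
      exact ⟨wv, Or.inl ⟨hwv, hfv.symm ▸ hv⟩⟩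
    · exact hcn A _ (fun _ h1 h2 => ⟨rfl, by rw [(hglue i).1]; exact h1⟩)
        (fun p hp => ⟨(), hp.1, by rw [← (hglue i).1]; exact hp.2⟩) hAco (hhub A hACadj)
    · exact hcn B _ (fun _ h1 h2 => ⟨rfl, by rw [(hglue i).1]; exact h1⟩)
        (fun p hp => ⟨(), hp.1, by rw [← (hglue i).1]; exact hp.2⟩) hBco (hhub B hBCadj)
    · intro j
      exact hcn (C (g j)) ∅
        (fun _ h1 _ => absurd (show f₀ (x₀ i) ∈ C (g j) by
          rw [(hglue i).1]; exact h1) ((hg j).2.1))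
        (fun p hp => absurd hp (Set.notMem_empty p)) (hCco (g j))
        (by obtain ⟨v, hv⟩ := hCne (g j); exact ⟨v, hv, (hint j v hv).1⟩)
    · exact hdisjH A B _ _ hdAB (fun p hp => hp) (fun p hp => hp)
    · intro j
      exact hdisjH A (C (g j)) _ _ (hdAC (g j)) (fun p hp => hp)
        (fun p hp => absurd hp (Set.notMem_empty p))
    · intro j
      exact hdisjH B (C (g j)) _ _ (hdBC (g j)) (fun p hp => hp)
        (fun p hp => absurd hp (Set.notMem_empty p))
    · intro j l hjl
      exact hdisjH (C (g j)) (C (g l)) _ _ (hdCC (g j) (g l) (fun e => hjl (hginj e)))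
        (fun p hp => absurd hp (Set.notMem_empty p))
        (fun p hp => absurd hp (Set.notMem_empty p))
    · exact fun j => hadjH A _ j (hACadj (g j))
    · exact fun j => hadjH B _ j (hBCadj (g j))
  -- at most n-1 of the C's are inner to any one piece
  have hInn : ∀ i : Fin t, (Finset.univ.filter (fun k => C k ⊆ f i '' {w : W i | w ≠ z i} ∧
      f₀ (x₀ i) ∉ C k ∧ f₀ (y₀ i) ∉ C k)).card < n := by
    intro i
    by_contra hge
    push_neg at hge
    obtain ⟨g, hginj, hgmem⟩ := exists_inj_fin _ n hge
    exact Hbound i g hginj (fun j => (Finset.mem_filter.1 (hgmem j)).2)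
  -- the case where a hub avoids the centre
  have hLcase : ∀ (X : Set V), X.Nonempty → (G.induce X).Connected →
      (∀ k, ∃ p ∈ X, ∃ q ∈ C k, G.Adj p q) →
      (∀ v ∈ X, v ∉ f₀ '' {u : V₀ | ∀ j, u ≠ z₀ j}) → False := by
    intro X hXne hXco hXadj hXP
    obtain ⟨v₀, hv₀⟩ := hXne
    rcases hcoverV v₀ with hv₀P | ⟨i, hv₀Q⟩
    · exact hXP v₀ hv₀ hv₀P
    have hXQ : ∀ v ∈ X, v ∈ f i '' {w : W i | w ≠ z i} := hLocalQ X hXco hXP i v₀ hv₀ hv₀Q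
    have hdich : ∀ k, (C k ⊆ f i '' {w : W i | w ≠ z i} ∧ f₀ (x₀ i) ∉ C k ∧ f₀ (y₀ i) ∉ C k)
        ∨ (f₀ (x₀ i) ∈ C k ∨ f₀ (y₀ i) ∈ C k) := by
      intro k
      by_cases hgk : f₀ (x₀ i) ∈ C k ∨ f₀ (y₀ i) ∈ C k
      · exact Or.inr hgk
      · push_neg at hgk
        refine Or.inl ⟨?_, hgk.1, hgk.2⟩
        intro w hw
        by_contra hwQ
        obtain ⟨p, hpX, q, hq, hpq⟩ := hXadj k
        have hqQ : q ∈ f i '' {w : W i | w ≠ z i} :=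
          hQedge i p q hpq (hXQ p hpX) (hXP p hpX)
        rcases hGateQ (C k) (hCco k) i w q hw hwQ hq hqQ with h | h
        · exact hgk.1 h
        · exact hgk.2 h
    -- at most two C's own a gate of the piece
    have hOwn : (Finset.univ.filter
        (fun k => f₀ (x₀ i) ∈ C k ∨ f₀ (y₀ i) ∈ C k)).card ≤ 2 := by
      have h2 : (Finset.univ.filter
            (fun k => f₀ (x₀ i) ∈ C k ∨ f₀ (y₀ i) ∈ C k)).card ≤
          ({f₀ (x₀ i), f₀ (y₀ i)} : Finset V).card := Finset.card_le_card_of_injOn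
        (fun k => if f₀ (x₀ i) ∈ C k then f₀ (x₀ i) else f₀ (y₀ i))
        (fun k _ => by
          by_cases h : f₀ (x₀ i) ∈ C k <;> simp [h])
        (by
          intro k hk l hl he
          have hmemk : (if f₀ (x₀ i) ∈ C k then f₀ (x₀ i) else f₀ (y₀ i)) ∈ C k := by
            rcases (Finset.mem_filter.1 hk).2 with h | h
            · rw [if_pos h]; exact h
            · by_cases h1 : f₀ (x₀ i) ∈ C k
              · rw [if_pos h1]; exact h1
              · rw [if_neg h1]; exact h
          have hmeml : (if f₀ (x₀ i) ∈ C l then f₀ (x₀ i) else f₀ (y₀ i)) ∈ C l := by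
            rcases (Finset.mem_filter.1 hl).2 with h | h
            · rw [if_pos h]; exact h
            · by_cases h1 : f₀ (x₀ i) ∈ C l
              · rw [if_pos h1]; exact h1
              · rw [if_neg h1]; exact h
          by_contra hkl
          replace he : (if f₀ (x₀ i) ∈ C k then f₀ (x₀ i) else f₀ (y₀ i)) =
              (if f₀ (x₀ i) ∈ C l then f₀ (x₀ i) else f₀ (y₀ i)) := he
          have hmeml' : (if f₀ (x₀ i) ∈ C k then f₀ (x₀ i) else f₀ (y₀ i)) ∈ C l := by
            rw [he]; exact hmeml
          exact Set.disjoint_left.1 (hdCC k l hkl) hmemk hmeml')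
      calc (Finset.univ.filter _).card ≤ ({f₀ (x₀ i), f₀ (y₀ i)} : Finset V).card := h2
        _ ≤ 2 := by
          apply le_trans (Finset.card_insert_le _ _)
          simp
    have hsub : Finset.univ \ (Finset.univ.filter
        (fun k => f₀ (x₀ i) ∈ C k ∨ f₀ (y₀ i) ∈ C k)) ⊆
        Finset.univ.filter (fun k => C k ⊆ f i '' {w : W i | w ≠ z i} ∧
          f₀ (x₀ i) ∉ C k ∧ f₀ (y₀ i) ∉ C k) := by
      intro k hk
      rw [Finset.mem_sdiff, Finset.mem_filter] at hk
      refine Finset.mem_filter.2 ⟨Finset.mem_univ _, ?_⟩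
      rcases hdich k with h | h
      · exact h
      · exact absurd ⟨Finset.mem_univ _, h⟩ hk.2
    have hcard1 : m * n - 2 ≤ (Finset.univ.filter (fun k => C k ⊆ f i '' {w : W i | w ≠ z i} ∧
        f₀ (x₀ i) ∉ C k ∧ f₀ (y₀ i) ∉ C k)).card := by
      have h3 := Finset.card_le_card hsub
      have h4 := Finset.card_sdiff_of_subset (Finset.subset_univ (Finset.univ.filter
        (fun k => f₀ (x₀ i) ∈ C k ∨ f₀ (y₀ i) ∈ C k)))
      rw [h4] at h3
      have h5 : (Finset.univ : Finset (Fin (m * n))).card = m * n := by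
        simp
      omega
    have hge2 : 2 * n ≤ m * n := Nat.mul_le_mul_right n (hm2 i)
    have := hInn i
    have := hn2 i
    omega
  -- main case split
  by_cases hAP : ∀ v ∈ A, v ∉ f₀ '' {u : V₀ | ∀ j, u ≠ z₀ j}
  · exact hLcase A hAne hAco hACadj hAP
  by_cases hBP : ∀ v ∈ B, v ∉ f₀ '' {u : V₀ | ∀ j, u ≠ z₀ j}
  · exact hLcase B hBne hBco hBCadj hBP
  push_neg at hAP hBP
  obtain ⟨pa, hpaA, hpaP⟩ := hAP
  obtain ⟨pb, hpbB, hpbP⟩ := hBP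
  -- CASE M : both hubs meet the centre
  set used : Fin t → Prop := fun i =>
    ∃ k, (∀ v ∈ C k, v ∉ f₀ '' {u : V₀ | ∀ j, u ≠ z₀ j}) ∧
      (C k ∩ f i '' {w : W i | w ≠ z i}).Nonempty with huseddef
  have hUsedA : ∀ i, used i → f₀ (x₀ i) ∈ A ∨ f₀ (y₀ i) ∈ A := by
    intro i hu
    obtain ⟨k, hkP, q0, hq0C, hq0Q⟩ := hu
    obtain ⟨p, hpA, q, hqC, hpq⟩ := hACadj k
    have hqQ : q ∈ f i '' {w : W i | w ≠ z i} :=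
      hLocalQ (C k) (hCco k) hkP i q0 hq0C hq0Q q hqC
    have hpQ : p ∈ f i '' {w : W i | w ≠ z i} := hQedge i q p hpq.symm hqQ (hkP q hqC)
    by_cases hpP : p ∈ f₀ '' {u : V₀ | ∀ j, u ≠ z₀ j}
    · rcases hPQ' i ⟨hpQ, hpP⟩ with h | h
      · exact Or.inl (h ▸ hpA)
      · exact Or.inr (Set.mem_singleton_iff.1 h ▸ hpA)
    · exact hGateP A hAco i p pa hpA hpQ hpP hpaA hpaP
  have hUsedB : ∀ i, used i → f₀ (x₀ i) ∈ B ∨ f₀ (y₀ i) ∈ B := by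
    intro i hu
    obtain ⟨k, hkP, q0, hq0C, hq0Q⟩ := hu
    obtain ⟨p, hpB, q, hqC, hpq⟩ := hBCadj k
    have hqQ : q ∈ f i '' {w : W i | w ≠ z i} :=
      hLocalQ (C k) (hCco k) hkP i q0 hq0C hq0Q q hqC
    have hpQ : p ∈ f i '' {w : W i | w ≠ z i} := hQedge i q p hpq.symm hqQ (hkP q hqC)
    by_cases hpP : p ∈ f₀ '' {u : V₀ | ∀ j, u ≠ z₀ j}
    · rcases hPQ' i ⟨hpQ, hpP⟩ with h | h
      · exact Or.inl (h ▸ hpB)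
      · exact Or.inr (Set.mem_singleton_iff.1 h ▸ hpB)
    · exact hGateP B hBco i p pb hpB hpQ hpP hpbB hpbP
  have hNoUsed : ∀ (i : Fin t) (S S' : Set V),
      (Disjoint S A ∨ Disjoint S B) → Disjoint S' A → Disjoint S' B →
      f₀ (x₀ i) ∈ S ∪ S' → f₀ (y₀ i) ∈ S ∪ S' → ¬ used i := by
    intro i S S' hS hS'A hS'B hgx hgy hu
    have hAS : ∃ v, v ∈ S ∧ v ∈ A := by
      rcases hUsedA i hu with h | h
      · rcases hgx with h2 | h2
        · exact ⟨_, h2, h⟩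
        · exact absurd h (Set.disjoint_left.1 hS'A h2)
      · rcases hgy with h2 | h2
        · exact ⟨_, h2, h⟩
        · exact absurd h (Set.disjoint_left.1 hS'A h2)
    have hBS : ∃ v, v ∈ S ∧ v ∈ B := by
      rcases hUsedB i hu with h | h
      · rcases hgx with h2 | h2
        · exact ⟨_, h2, h⟩
        · exact absurd h (Set.disjoint_left.1 hS'B h2)
      · rcases hgy with h2 | h2
        · exact ⟨_, h2, h⟩
        · exact absurd h (Set.disjoint_left.1 hS'B h2)
    rcases hS with hd | hd
    · obtain ⟨v, hv1, hv2⟩ := hAS; exact Set.disjoint_left.1 hd hv1 hv2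
    · obtain ⟨v, hv1, hv2⟩ := hBS; exact Set.disjoint_left.1 hd hv1 hv2
  -- the contracted branch sets in G₀
  set hat : Set V → Set V₀ := fun S =>
    {u | u ∈ {u : V₀ | ∀ j, u ≠ z₀ j} ∧ f₀ u ∈ S} ∪
    {u | ∃ i, u = z₀ i ∧ f₀ (x₀ i) ∈ S ∧ ¬ used i} with hhatdef
  have hhatconn : ∀ S : Set V, (G.induce S).Connected →
      (S ∩ f₀ '' {u : V₀ | ∀ j, u ≠ z₀ j}).Nonempty →
      (∀ i, f₀ (x₀ i) ∈ S → f₀ (y₀ i) ∈ S → ¬ used i) →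
      (G₀.induce (hat S)).Connected := by
    intro S hco hne hbg
    exact connect_lemma (G := G) (T := G₀) (φ := f₀) (ζ := z₀) (ξ := x₀) (υ := y₀)
      (O := fun i => f i '' {w : W i | w ≠ z i}) (K := {u : V₀ | ∀ j, u ≠ z₀ j})
      (R := f₀ '' {u : V₀ | ∀ j, u ≠ z₀ j}) rfl hz₀adj hx₀S hy₀S hf₀inj
      (fun u v hu hv hs ha => (hedgeP u v hu hv hs).1 ha) hcoverV
      (fun i v hv => hPQ' i ⟨hv.1, hv.2⟩) hQedge S _
      (fun i h1 h2 => ⟨i, rfl, h1, hbg i h1 h2⟩)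
      (fun p hp => by obtain ⟨i, h1, h2, _⟩ := hp; exact ⟨i, h1, h2⟩)
      hco hne
  have hhatdisj : ∀ S S' : Set V, Disjoint S S' → Disjoint (hat S) (hat S') := by
    intro S S' hSS
    rw [Set.disjoint_left]
    rintro u (hu | hu) (hu' | hu')
    · exact Set.disjoint_left.1 hSS hu.2 hu'.2
    · obtain ⟨i, rfl, _, _⟩ := hu'; exact hu.1 i rfl
    · obtain ⟨i, rfl, _, _⟩ := hu; exact hu'.1 i rfl
    · obtain ⟨i, rfl, h2, _⟩ := hu
      obtain ⟨i', he, h2', _⟩ := hu'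
      have hii : i = i' := hz₀inj he
      subst hii
      exact Set.disjoint_left.1 hSS h2 h2'
  have hhatrep : ∀ (S : Set V) (i : Fin t), used i → Disjoint (hat S) {z₀ i} := by
    intro S i hu
    rw [Set.disjoint_right]
    intro u hui
    rw [Set.mem_singleton_iff] at hui
    subst hui
    rintro (hu2 | hu2)
    · exact hu2.1 i rfl
    · obtain ⟨i', he, _, hnu⟩ := hu2
      have hii : i = i' := hz₀inj he
      subst hii
      exact hnu hu
  have hADJ : ∀ (S S' : Set V), (G.induce S).Connected → (G.induce S').Connected →
      (S ∩ f₀ '' {u : V₀ | ∀ j, u ≠ z₀ j}).Nonempty →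
      (S' ∩ f₀ '' {u : V₀ | ∀ j, u ≠ z₀ j}).Nonempty →
      Disjoint S S' → (Disjoint S A ∨ Disjoint S B) → Disjoint S' A → Disjoint S' B →
      (∃ p ∈ S, ∃ q ∈ S', G.Adj p q) →
      ∃ p' ∈ hat S, ∃ q' ∈ hat S', G₀.Adj p' q' := by
    intro S S' hcoS hcoS' hneS hneS' hSS hSAB hS'A hS'B hpq0
    obtain ⟨p, hpS, q, hqS', hpq⟩ := hpq0
    obtain ⟨pc, hpcS, hpcP⟩ := hneS
    obtain ⟨qc, hqcS', hqcP⟩ := hneS'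
    rcases hedgesG p q hpq with ⟨hpP, hqP⟩ | ⟨i, hpQ, hqQ⟩
    · obtain ⟨u, hu, rfl⟩ := hpP
      obtain ⟨u', hu', rfl⟩ := hqP
      by_cases hvp : ∀ i, s(u, u') ≠ s(x₀ i, y₀ i)
      · exact ⟨u, Or.inl ⟨hu, hpS⟩, u', Or.inl ⟨hu', hqS'⟩, (hedgeP u u' hu hu' hvp).1 hpq⟩
      · push_neg at hvp
        obtain ⟨i, hi⟩ := hvp
        rcases Sym2.eq_iff.1 hi with ⟨h1, h2⟩ | ⟨h1, h2⟩
        · subst h1; subst h2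
          have hnu : ¬ used i := hNoUsed i S S' hSAB hS'A hS'B (Or.inl hpS) (Or.inr hqS')
          exact ⟨z₀ i, Or.inr ⟨i, rfl, hpS, hnu⟩, y₀ i, Or.inl ⟨hy₀S i, hqS'⟩,
            (hz₀adj i _).2 (Or.inr rfl)⟩
        · subst h1; subst h2
          have hnu : ¬ used i := hNoUsed i S S' hSAB hS'A hS'B (Or.inr hqS') (Or.inl hpS)
          exact ⟨y₀ i, Or.inl ⟨hy₀S i, hpS⟩, z₀ i, Or.inr ⟨i, rfl, hqS', hnu⟩,
            ((hz₀adj i _).2 (Or.inr rfl)).symm⟩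
    · have hSgate : f₀ (x₀ i) ∈ S ∨ f₀ (y₀ i) ∈ S := by
        by_cases hpP : p ∈ f₀ '' {u : V₀ | ∀ j, u ≠ z₀ j}
        · rcases hPQ' i ⟨hpQ, hpP⟩ with h | h
          · exact Or.inl (h ▸ hpS)
          · exact Or.inr (Set.mem_singleton_iff.1 h ▸ hpS)
        · exact hGateP S hcoS i p pc hpS hpQ hpP hpcS hpcP
      have hS'gate : f₀ (x₀ i) ∈ S' ∨ f₀ (y₀ i) ∈ S' := by
        by_cases hqP : q ∈ f₀ '' {u : V₀ | ∀ j, u ≠ z₀ j}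
        · rcases hPQ' i ⟨hqQ, hqP⟩ with h | h
          · exact Or.inl (h ▸ hqS')
          · exact Or.inr (Set.mem_singleton_iff.1 h ▸ hqS')
        · exact hGateP S' hcoS' i q qc hqS' hqQ hqP hqcS' hqcP
      rcases hSgate with hgS | hgS <;> rcases hS'gate with hgS' | hgS'
      · exact absurd hgS' (Set.disjoint_left.1 hSS hgS)
      · have hnu : ¬ used i := hNoUsed i S S' hSAB hS'A hS'B (Or.inl hgS) (Or.inr hgS')
        exact ⟨z₀ i, Or.inr ⟨i, rfl, hgS, hnu⟩, y₀ i, Or.inl ⟨hy₀S i, hgS'⟩,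
          (hz₀adj i _).2 (Or.inr rfl)⟩
      · have hnu : ¬ used i := hNoUsed i S S' hSAB hS'A hS'B (Or.inr hgS') (Or.inl hgS)
        exact ⟨y₀ i, Or.inl ⟨hy₀S i, hgS⟩, z₀ i, Or.inr ⟨i, rfl, hgS', hnu⟩,
          ((hz₀adj i _).2 (Or.inr rfl)).symm⟩
      · exact absurd hgS' (Set.disjoint_left.1 hSS hgS)
  have hRepAdjA : ∀ i, used i → ∃ p' ∈ hat A, ∃ q' ∈ ({z₀ i} : Set V₀), G₀.Adj p' q' := by
    intro i hu
    rcases hUsedA i hu with h | h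
    · exact ⟨x₀ i, Or.inl ⟨hx₀S i, h⟩, z₀ i, rfl, ((hz₀adj i _).2 (Or.inl rfl)).symm⟩
    · exact ⟨y₀ i, Or.inl ⟨hy₀S i, h⟩, z₀ i, rfl, ((hz₀adj i _).2 (Or.inr rfl)).symm⟩
  have hRepAdjB : ∀ i, used i → ∃ p' ∈ hat B, ∃ q' ∈ ({z₀ i} : Set V₀), G₀.Adj p' q' := by
    intro i hu
    rcases hUsedB i hu with h | h
    · exact ⟨x₀ i, Or.inl ⟨hx₀S i, h⟩, z₀ i, rfl, ((hz₀adj i _).2 (Or.inl rfl)).symm⟩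
    · exact ⟨y₀ i, Or.inl ⟨hy₀S i, h⟩, z₀ i, rfl, ((hz₀adj i _).2 (Or.inr rfl)).symm⟩
  -- counting
  have hcount : m ≤ (Finset.univ.filter (fun k =>
      (C k ∩ f₀ '' {u : V₀ | ∀ j, u ≠ z₀ j}).Nonempty)).card +
      (Finset.univ.filter used).card := by
    by_contra hlt
    push_neg at hlt
    have hsub : Finset.univ.filter (fun k =>
        ¬ (C k ∩ f₀ '' {u : V₀ | ∀ j, u ≠ z₀ j}).Nonempty) ⊆
        (Finset.univ.filter used).biUnion (fun i => Finset.univ.filter (fun k =>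
          C k ⊆ f i '' {w : W i | w ≠ z i} ∧ f₀ (x₀ i) ∉ C k ∧ f₀ (y₀ i) ∉ C k)) := by
      intro k hk
      rw [Finset.mem_filter] at hk
      have hkP : ∀ v ∈ C k, v ∉ f₀ '' {u : V₀ | ∀ j, u ≠ z₀ j} := by
        intro v hv hvP; exact hk.2 ⟨v, hv, hvP⟩
      obtain ⟨v, hv⟩ := hCne k
      rcases hcoverV v with h | ⟨i, hvQ⟩
      · exact absurd h (hkP v hv)
      refine Finset.mem_biUnion.2 ⟨i, ?_, ?_⟩
      · exact Finset.mem_filter.2 ⟨Finset.mem_univ _, ⟨k, hkP, ⟨v, hv, hvQ⟩⟩⟩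
      · refine Finset.mem_filter.2 ⟨Finset.mem_univ _,
          fun w hw => hLocalQ (C k) (hCco k) hkP i v hv hvQ w hw,
          fun hmem => hkP _ hmem (haP i), fun hmem => hkP _ hmem (hbP i)⟩
    have h1 : (Finset.univ.filter (fun k =>
        ¬ (C k ∩ f₀ '' {u : V₀ | ∀ j, u ≠ z₀ j}).Nonempty)).card
        ≤ (Finset.univ.filter used).card * (n - 1) := by
      calc (Finset.univ.filter (fun k =>
          ¬ (C k ∩ f₀ '' {u : V₀ | ∀ j, u ≠ z₀ j}).Nonempty)).card
          ≤ ((Finset.univ.filter used).biUnion (fun i => Finset.univ.filter (fun k =>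
            C k ⊆ f i '' {w : W i | w ≠ z i} ∧ f₀ (x₀ i) ∉ C k ∧ f₀ (y₀ i) ∉ C k))).card :=
          Finset.card_le_card hsub
        _ ≤ ∑ i ∈ Finset.univ.filter used, (Finset.univ.filter (fun k =>
            C k ⊆ f i '' {w : W i | w ≠ z i} ∧ f₀ (x₀ i) ∉ C k ∧ f₀ (y₀ i) ∉ C k)).card :=
          Finset.card_biUnion_le
        _ ≤ (Finset.univ.filter used).card * (n - 1) := by
          have hs := Finset.sum_le_card_nsmul (Finset.univ.filter used)
            (fun i => (Finset.univ.filter (fun k =>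
              C k ⊆ f i '' {w : W i | w ≠ z i} ∧ f₀ (x₀ i) ∉ C k ∧ f₀ (y₀ i) ∉ C k)).card)
            (n - 1) (fun i _ => Nat.le_pred_of_lt (hInn i))
          simpa [smul_eq_mul] using hs
    have h2 : (Finset.univ.filter (fun k =>
        (C k ∩ f₀ '' {u : V₀ | ∀ j, u ≠ z₀ j}).Nonempty)).card +
        (Finset.univ.filter (fun k =>
        ¬ (C k ∩ f₀ '' {u : V₀ | ∀ j, u ≠ z₀ j}).Nonempty)).card = m * n := by
      rw [Finset.card_filter_add_card_filter_not]
      simp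
    rcases Nat.eq_zero_or_pos (Finset.univ.filter used).card with hg | hg
    · rw [hg, Nat.zero_mul] at h1
      have hmn : m ≤ m * n := Nat.le_mul_of_pos_right m hn
      omega
    · obtain ⟨i, hi⟩ := Finset.card_pos.1 hg
      have hn2' := hn2 i
      set c := (Finset.univ.filter (fun k =>
        (C k ∩ f₀ '' {u : V₀ | ∀ j, u ≠ z₀ j}).Nonempty)).card with hcdef2
      set gg := (Finset.univ.filter used).card with hgdef2
      have e1 : c + gg * (n - 1) ≤ (c + gg) * (n - 1) := by
        have hcc : c ≤ c * (n - 1) := Nat.le_mul_of_pos_right c (by omega)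
        rw [Nat.add_mul]
        omega
      have e2 : (c + gg) * (n - 1) ≤ (m - 1) * (n - 1) :=
        Nat.mul_le_mul_right _ (by omega)
      have e3 : (m - 1) * (n - 1) < m * n := by
        obtain ⟨m1, rfl⟩ : ∃ m1, m = m1 + 1 := ⟨m - 1, by omega⟩
        obtain ⟨n1, rfl⟩ : ∃ n1, n = n1 + 1 := ⟨n - 1, by omega⟩
        simp only [Nat.add_sub_cancel]
        nlinarith
      omega
  -- choose the m branch vertices
  obtain ⟨e, heinj, hemem⟩ := exists_inj_fin
    ((Finset.univ.filter (fun k =>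
      (C k ∩ f₀ '' {u : V₀ | ∀ j, u ≠ z₀ j}).Nonempty)).map
        ⟨Sum.inl, Sum.inl_injective⟩ ∪
     (Finset.univ.filter used).map ⟨Sum.inr, Sum.inr_injective⟩) m
    (by
      rw [Finset.card_union_of_disjoint (by
        rw [Finset.disjoint_left]
        rintro a ha hb
        obtain ⟨k, _, rfl⟩ := Finset.mem_map.1 ha
        obtain ⟨i, _, he2⟩ := Finset.mem_map.1 hb
        simp at he2)]
      rw [Finset.card_map, Finset.card_map]
      exact hcount)
  have hedata : ∀ j : Fin m, (∃ k, e j = Sum.inl k ∧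
      (C k ∩ f₀ '' {u : V₀ | ∀ j, u ≠ z₀ j}).Nonempty) ∨
      (∃ i, e j = Sum.inr i ∧ used i) := by
    intro j
    rcases Finset.mem_union.1 (hemem j) with h | h
    · obtain ⟨k, hk, he2⟩ := Finset.mem_map.1 h
      exact Or.inl ⟨k, he2.symm, (Finset.mem_filter.1 hk).2⟩
    · obtain ⟨i, hi, he2⟩ := Finset.mem_map.1 h
      exact Or.inr ⟨i, he2.symm, (Finset.mem_filter.1 hi).2⟩
  have hdemp : ∀ S : Set V, Disjoint (∅ : Set V) S := fun S => Set.empty_disjoint S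
  apply h₀
  refine isMinor_K2 G₀ m (hat A) (hat B)
    (fun j => Sum.elim (fun k => hat (C k)) (fun i => ({z₀ i} : Set V₀)) (e j))
    ?_ ?_ ?_ ?_ ?_ ?_ ?_ ?_ ?_ ?_ ?_ ?_
  · obtain ⟨u, hu, hue⟩ := hpaP
    exact ⟨u, Or.inl ⟨hu, hue.symm ▸ hpaA⟩⟩
  · obtain ⟨u, hu, hue⟩ := hpbP
    exact ⟨u, Or.inl ⟨hu, hue.symm ▸ hpbB⟩⟩
  · intro j
    rcases hedata j with ⟨k, hek, hkc⟩ | ⟨i, hei, hui⟩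
    · rw [hek]
      obtain ⟨v, hv, u, hu, hue⟩ := hkc
      exact ⟨u, Or.inl ⟨hu, hue.symm ▸ hv⟩⟩
    · rw [hei]
      exact ⟨z₀ i, rfl⟩
  · exact hhatconn A hAco ⟨pa, hpaA, hpaP⟩
      (fun i h1 h2 => hNoUsed i A ∅ (Or.inr hdAB) (hdemp A) (hdemp B)
        (Or.inl h1) (Or.inl h2))
  · exact hhatconn B hBco ⟨pb, hpbB, hpbP⟩
      (fun i h1 h2 => hNoUsed i B ∅ (Or.inl hdAB.symm) (hdemp A) (hdemp B)
        (Or.inl h1) (Or.inl h2))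
  · intro j
    rcases hedata j with ⟨k, hek, hkc⟩ | ⟨i, hei, hui⟩
    · rw [hek]
      exact hhatconn (C k) (hCco k) hkc
        (fun i' h1 h2 => hNoUsed i' (C k) ∅ (Or.inl (hdAC k).symm)
          (hdemp A) (hdemp B) (Or.inl h1) (Or.inl h2))
    · rw [hei]
      exact induce_singleton_connected _ _
  · exact hhatdisj A B hdAB
  · intro j
    rcases hedata j with ⟨k, hek, hkc⟩ | ⟨i, hei, hui⟩
    · rw [hek]; exact hhatdisj A (C k) (hdAC k)
    · rw [hei]; exact hhatrep A i hui
  · intro j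
    rcases hedata j with ⟨k, hek, hkc⟩ | ⟨i, hei, hui⟩
    · rw [hek]; exact hhatdisj B (C k) (hdBC k)
    · rw [hei]; exact hhatrep B i hui
  · intro j l hjl
    have hne2 : e j ≠ e l := fun h => hjl (heinj h)
    rcases hedata j with ⟨k, hek, hkc⟩ | ⟨i, hei, hui⟩ <;>
      rcases hedata l with ⟨k', hek', hkc'⟩ | ⟨i', hei', hui'⟩
    · rw [hek, hek']
      refine hhatdisj (C k) (C k') (hdCC k k' ?_)
      intro hkk
      exact hne2 (by rw [hek, hek', hkk])
    · rw [hek, hei']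
      exact hhatrep (C k) i' hui'
    · rw [hei, hek']
      exact (hhatrep (C k') i hui).symm
    · rw [hei, hei']
      refine Set.disjoint_singleton.2 (fun h => ?_)
      have : i = i' := hz₀inj h
      exact hne2 (by rw [hei, hei', this])
  · intro j
    rcases hedata j with ⟨k, hek, hkc⟩ | ⟨i, hei, hui⟩
    · rw [hek]
      exact hADJ A (C k) hAco (hCco k) ⟨pa, hpaA, hpaP⟩ hkc (hdAC k)
        (Or.inr hdAB) (hdAC k).symm (hdBC k).symm (hACadj k)
    · rw [hei]
      exact hRepAdjA i hui
  · intro j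
    rcases hedata j with ⟨k, hek, hkc⟩ | ⟨i, hei, hui⟩
    · rw [hek]
      exact hADJ B (C k) hBco (hCco k) ⟨pb, hpbB, hpbP⟩ hkc (hdBC k)
        (Or.inl hdAB.symm) (hdAC k).symm (hdBC k).symm (hBCadj k)
    · rw [hei]
      exact hRepAdjB i hui
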